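/- Let r, s, n be positive integers with s ≤ r. Every r-coloring of the edges of the transitive tournament on n vertices contains a directed path on at least n^{1/⌈r/s⌉} vertices whose edges use at most s colors. -/

import Mathlib

/-- Longest path length ending at `v` along relation `R` (only edges going up in `Fin n`). -/
def pathF {n : ℕ} (R : Fin n → Fin n → Prop) [DecidableRel R] (v : Fin n) : ℕ :=
  1 + ((Finset.Iio v).attach.filter (fun u => R u.1 v)).sup (fun u => pathF R u.1)
termination_by v.val
decreasing_by
  exact Fin.lt_iff_val_lt_val.mp (Finset.mem_Iio.mp u.2)

lemma pathF_pos {n : ℕ} (R : Fin n → Fin n → Prop) [DecidableRel R] (v : Fin n) :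
    1 ≤ pathF R v := by
  rw [pathF]; omega

lemma pathF_lt {n : ℕ} (R : Fin n → Fin n → Prop) [DecidableRel R] {u v : Fin n}
    (huv : u < v) (h : R u v) : pathF R u < pathF R v := by
  conv_rhs => rw [pathF]
  have hm : (⟨u, Finset.mem_Iio.mpr huv⟩ : {x // x ∈ Finset.Iio v}) ∈
      (Finset.Iio v).attach.filter (fun u => R u.1 v) := by
    simp [Finset.mem_filter, h]
  have h2 := Finset.le_sup (f := fun u : {x // x ∈ Finset.Iio v} => pathF R u.1) hm
  change pathF R u ≤ _ at h2
  omega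

lemma pathF_chain {n : ℕ} (R : Fin n → Fin n → Prop) [DecidableRel R] (v : Fin n) :
    ∃ l : List (Fin n), l.Chain' R ∧ l.length = pathF R v ∧ l.getLast? = some v := by
  have key : ∀ m : ℕ, ∀ v : Fin n, v.val < m →
      ∃ l : List (Fin n), l.Chain' R ∧ l.length = pathF R v ∧ l.getLast? = some v := by
    intro m
    induction m with
    | zero => intro v hv; omega
    | succ m ih =>
      intro v hv
      by_cases hne : ((Finset.Iio v).attach.filter (fun u => R u.1 v)).Nonempty
      · obtain ⟨b, hb, hsup⟩ := Finset.exists_mem_eq_sup _ hne (fun u => pathF R u.1)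
        have hbv : b.1 < v := Finset.mem_Iio.mp b.2
        have hRb : R b.1 v := (Finset.mem_filter.mp hb).2
        obtain ⟨l, hc, hlen, hlast⟩ := ih b.1 (by
          have : b.1.val < v.val := hbv
          omega)
        refine ⟨l ++ [v], ?_, ?_, ?_⟩
        · rw [show List.Chain' R (l ++ [v]) ↔ _ from List.isChain_append]
          refine ⟨hc, List.isChain_singleton v, ?_⟩
          intro x hx y hy
          rw [hlast] at hx
          simp only [Option.mem_def, Option.some.injEq, List.head?_cons] at hx hy
          subst hx; subst hy
          exact hRb
        · rw [List.length_append, hlen]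
          conv_rhs => rw [pathF]
          rw [hsup]
          simp [add_comm]
        · exact List.getLast?_concat
      · have h1 : pathF R v = 1 := by
          rw [pathF, Finset.not_nonempty_iff_eq_empty.mp hne]
          simp
        exact ⟨[v], List.isChain_singleton v, by simp [h1], rfl⟩
  exact key (v.val + 1) v (Nat.lt_succ_self _)

theorem stmt_11 (r s n : ℕ) (hr : 0 < r) (hs : 0 < s) (hn : 0 < n) (hsr : s ≤ r)
    (c : Fin n → Fin n → Fin r) :
    ∃ S : Finset (Fin r), S.card ≤ s ∧
      ∃ l : List (Fin n),
        l.Chain' (fun x y => x < y ∧ c x y ∈ S) ∧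
        (n : ℝ) ^ ((1 : ℝ) / ((⌈(r : ℝ) / (s : ℝ)⌉₊ : ℕ) : ℝ)) ≤ (l.length : ℝ) := by
  set k : ℕ := ⌈(r : ℝ) / (s : ℝ)⌉₊ with hkdef
  have hk1 : 1 ≤ k := by
    rw [hkdef, Nat.one_le_ceil_iff]
    positivity
  have hrk : r ≤ s * k := by
    have h1 : (r : ℝ) / (s : ℝ) ≤ (k : ℝ) := Nat.le_ceil _
    have hs' : (0 : ℝ) < (s : ℝ) := by exact_mod_cast hs
    rw [div_le_iff₀ hs'] at h1
    have : (r : ℝ) ≤ ((s * k : ℕ) : ℝ) := by push_cast; linarith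
    exact_mod_cast this
  -- the per-group longest path lengths
  let f : Fin k → Fin n → ℕ := fun i =>
    pathF (fun x y => x < y ∧ (c x y).val / s = i.val)
  -- group index of a color
  have hgi : ∀ u v : Fin n, (c u v).val / s < k := by
    intro u v
    rw [Nat.div_lt_iff_lt_mul hs]
    calc (c u v).val < r := (c u v).isLt
      _ ≤ s * k := hrk
      _ = k * s := mul_comm _ _
  let L : ℕ := Finset.univ.sup (fun p : Fin k × Fin n => f p.1 p.2)
  have hfle : ∀ i v, f i v ≤ L :=
    fun i v => Finset.le_sup (f := fun p : Fin k × Fin n => f p.1 p.2)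
      (Finset.mem_univ (i, v))
  have hfpos : ∀ i v, 1 ≤ f i v := fun i v => pathF_pos _ v
  have hL1 : 1 ≤ L := le_trans (hfpos ⟨0, hk1⟩ ⟨0, hn⟩) (hfle _ _)
  -- injectivity of the profile map
  have inj : Function.Injective (fun v : Fin n =>
      (fun i : Fin k => (⟨f i v - 1, by have := hfle i v; have := hfpos i v; omega⟩ : Fin L))) := by
    intro u v h
    by_contra hne
    have hlt : ∀ a b : Fin n, a < b → False → True := fun _ _ _ _ => trivial
    rcases lt_trichotomy u v with huv | huv | huv
    · set i : Fin k := ⟨(c u v).val / s, hgi u v⟩ with hidef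
      have hR : u < v ∧ (c u v).val / s = i.val := ⟨huv, rfl⟩
      have hfl : f i u < f i v := pathF_lt _ huv hR
      have h' := congrFun h i
      simp only [Fin.mk.injEq] at h'
      have h1 := hfpos i u
      omega
    · exact hne (by rw [huv])
    · set i : Fin k := ⟨(c v u).val / s, hgi v u⟩ with hidef
      have hR : v < u ∧ (c v u).val / s = i.val := ⟨huv, rfl⟩
      have hfl : f i v < f i u := pathF_lt _ huv hR
      have h' := congrFun h i
      simp only [Fin.mk.injEq] at h'
      have h1 := hfpos i v
      omega
  have hcard : n ≤ L ^ k := by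
    have := Fintype.card_le_of_injective _ inj
    simpa using this
  -- the maximizing pair
  haveI : Nonempty (Fin k × Fin n) := ⟨(⟨0, hk1⟩, ⟨0, hn⟩)⟩
  obtain ⟨p, -, hp⟩ := Finset.exists_mem_eq_sup (Finset.univ : Finset (Fin k × Fin n))
    (Finset.univ_nonempty (α := Fin k × Fin n)) (fun p => f p.1 p.2)
  obtain ⟨i₀, v₀⟩ := p
  -- real inequality
  have hk0 : ((k : ℕ) : ℝ) ≠ 0 := by positivity
  have hreal : (n : ℝ) ^ ((1 : ℝ) / (k : ℝ)) ≤ (L : ℝ) := by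
    have h1 : (n : ℝ) ≤ (L : ℝ) ^ (k : ℕ) := by exact_mod_cast hcard
    calc (n : ℝ) ^ ((1 : ℝ) / (k : ℝ))
        ≤ ((L : ℝ) ^ (k : ℕ)) ^ ((1 : ℝ) / (k : ℝ)) := by
          apply Real.rpow_le_rpow (by positivity) h1 (by positivity)
      _ = (L : ℝ) := by
          rw [← Real.rpow_natCast (L : ℝ) k, ← Real.rpow_mul (by positivity),
            mul_one_div, div_self hk0, Real.rpow_one]
  -- the chain
  obtain ⟨l, hchain, hlen, -⟩ := pathF_chain
    (fun x y => x < y ∧ (c x y).val / s = i₀.val) v₀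
  refine ⟨Finset.univ.filter (fun j : Fin r => j.val / s = i₀.val), ?_, l, ?_, ?_⟩
  · -- card bound
    have : (Finset.univ.filter (fun j : Fin r => j.val / s = i₀.val)).card ≤
        (Finset.range s).card := by
      apply Finset.card_le_card_of_injOn (fun j => j.val % s)
      · intro j hj
        simp only [Finset.mem_coe, Finset.mem_range]
        exact Nat.mod_lt _ hs
      · intro j1 hj1 j2 hj2 hmod
        simp only [Finset.mem_coe, Finset.mem_filter] at hj1 hj2
        have e1 := Nat.div_add_mod j1.val s
        have e2 := Nat.div_add_mod j2.val s
        rw [hj1.2] at e1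
        rw [hj2.2] at e2
        simp only at hmod
        apply Fin.ext
        omega
    simpa using this
  · apply hchain.imp
    intro x y hxy
    exact ⟨hxy.1, by simp [Finset.mem_filter, hxy.2]⟩
  · rw [hlen]
    have : f i₀ v₀ = L := hp.symm
    calc (n : ℝ) ^ ((1 : ℝ) / (k : ℝ)) ≤ (L : ℝ) := hreal
      _ = ((pathF (fun x y => x < y ∧ (c x y).val / s = i₀.val) v₀ : ℕ) : ℝ) := by
        exact_mod_cast congrArg Nat.cast this.symm
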